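/- arXiv:1403.6802 — 2 statements merged into one kernel-verified Lean document; each statement's English description precedes it below -/
import Mathlib

section
/- Let K_P > 0 and 0 < τ < π/(2K_P). Then for all ω > 0, K_P e^{-jτω}/(jω) ≠ -1. -/
open Real Complex

theorem stmt_8 (K_P τ : ℝ) (hK : 0 < K_P) (hτ0 : 0 < τ) (hτ : τ < π / (2 * K_P)) :
    ∀ ω : ℝ, 0 < ω →
      (K_P : ℂ) * Complex.exp (-Complex.I * τ * ω) / (Complex.I * ω) ≠ -1 := by
  intro ω hω h
  have hIω : (Complex.I * (ω : ℂ)) ≠ 0 :=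
    mul_ne_zero Complex.I_ne_zero (by exact_mod_cast hω.ne')
  rw [div_eq_iff hIω] at h
  have hexp : (-Complex.I * (τ : ℂ) * (ω : ℂ)) = ((-(τ * ω) : ℝ) : ℂ) * Complex.I := by
    push_cast; ring
  rw [hexp] at h
  -- take absolute values
  have habs : K_P = ω := by
    have := congrArg (‖·‖) h
    rw [norm_mul, Complex.norm_exp_ofReal_mul_I] at this
    simpa [abs_of_pos hK, abs_of_pos hω] using this
  have hre' : K_P * Real.cos (-(τ * ω)) = 0 := by
    have := congrArg Complex.re h
    rw [Complex.mul_re, Complex.exp_ofReal_mul_I_re, Complex.exp_ofReal_mul_I_im] at this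
    simpa using this
  have hcos : Real.cos (τ * ω) = 0 := by
    rw [Real.cos_neg] at hre'
    rcases mul_eq_zero.mp hre' with h1 | h1
    · exact absurd h1 hK.ne'
    · exact h1
  have hlt : τ * ω < π / 2 := by
    have : τ * K_P < π / 2 := by
      have h2K : 0 < 2 * K_P := by positivity
      calc τ * K_P < (π / (2 * K_P)) * K_P := by
            exact mul_lt_mul_of_pos_right hτ hK
        _ = π / 2 := by field_simp
    rwa [habs] at this
  have hpos : 0 < Real.cos (τ * ω) :=
    Real.cos_pos_of_mem_Ioo ⟨by nlinarith [Real.pi_pos], hlt⟩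
  linarith
end

section
/- If F is constant on the interval [t-τ, t], then the estimator F_est(t) = -(6/τ³) ∫_{t-τ}^{t} [(τ - 2σ')y(t-τ+σ') + α σ'(τ - σ')u(t-τ+σ')] dσ' recovers F exactly, where y satisfies ẏ = F + αu on [t-τ, t]. Equivalently, with the change of variable to [0, τ]: if ẏ(s) = F + αu(s) on [0,τ] with F constant, then -(6/τ³)∫_0^τ [(τ-2σ)y(σ) + ασ(τ-σ)u(σ)]dσ = F. -/
open Real intervalIntegral

theorem stmt_14 (τ α F : ℝ) (hτ : 0 < τ) (u y : ℝ → ℝ)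
    (hu : ContinuousOn u (Set.Icc 0 τ))
    (hy : ∀ s ∈ Set.Icc (0 : ℝ) τ, HasDerivAt y (F + α * u s) s) :
    -(6 / τ ^ 3) *
        ∫ σ in (0 : ℝ)..τ, ((τ - 2 * σ) * y σ + α * σ * (τ - σ) * u σ) = F := by
  have huIcc : Set.uIcc (0 : ℝ) τ = Set.Icc 0 τ := Set.uIcc_of_le hτ.le
  -- integration by parts with g σ = σ (τ - σ)
  have hg : ∀ x ∈ Set.uIcc (0:ℝ) τ, HasDerivAt (fun σ => σ * (τ - σ)) (τ - 2 * x) x := by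
    intro x _
    have : HasDerivAt (fun σ : ℝ => σ * (τ - σ)) (1 * (τ - x) + x * (0 - 1)) x :=
      (hasDerivAt_id x).mul ((hasDerivAt_const x τ).sub (hasDerivAt_id x))
    convert this using 1; ring
  have hy' : ∀ x ∈ Set.uIcc (0:ℝ) τ, HasDerivAt y (F + α * u x) x := by
    rw [huIcc]; exact hy
  have hcont : ContinuousOn (fun x => F + α * u x) (Set.Icc 0 τ) :=
    continuousOn_const.add (continuousOn_const.mul hu)
  have hint1 : IntervalIntegrable (fun x : ℝ => τ - 2 * x) MeasureTheory.volume 0 τ :=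
    (continuous_const.sub (continuous_const.mul continuous_id)).intervalIntegrable 0 τ
  have hint2 : IntervalIntegrable (fun x => F + α * u x) MeasureTheory.volume 0 τ := by
    apply ContinuousOn.intervalIntegrable; rwa [huIcc]
  have ibp := intervalIntegral.integral_mul_deriv_eq_deriv_mul hg hy' hint1 hint2
  -- ibp : ∫ x in 0..τ, x*(τ-x) * (F + α * u x) = τ*(τ-τ)*y τ - 0*(τ-0)*y 0 - ∫ x in 0..τ, (τ-2x)*y x
  have hyint : IntervalIntegrable y MeasureTheory.volume 0 τ := by
    apply ContinuousOn.intervalIntegrable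
    rw [huIcc]
    exact fun x hx => (hy x hx).continuousAt.continuousWithinAt
  have hky : IntervalIntegrable (fun x => (τ - 2 * x) * y x) MeasureTheory.volume 0 τ :=
    hint1.mul_continuousOn (by rw [huIcc]; exact fun x hx => (hy x hx).continuousAt.continuousWithinAt)
  have hku : IntervalIntegrable (fun x => α * x * (τ - x) * u x) MeasureTheory.volume 0 τ := by
    apply ContinuousOn.intervalIntegrable
    rw [huIcc]
    exact (((continuousOn_const.mul continuousOn_id).mul
      (continuousOn_const.sub continuousOn_id)).mul hu)
  have hsplit : (∫ σ in (0:ℝ)..τ, ((τ - 2 * σ) * y σ + α * σ * (τ - σ) * u σ))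
      = (∫ σ in (0:ℝ)..τ, (τ - 2 * σ) * y σ) + ∫ σ in (0:ℝ)..τ, α * σ * (τ - σ) * u σ :=
    intervalIntegral.integral_add hky hku
  have hFu : (∫ x in (0:ℝ)..τ, x * (τ - x) * (F + α * u x))
      = F * (∫ x in (0:ℝ)..τ, x * (τ - x)) + ∫ x in (0:ℝ)..τ, α * x * (τ - x) * u x := by
    rw [← intervalIntegral.integral_const_mul, ← intervalIntegral.integral_add]
    · apply intervalIntegral.integral_congr; intro x _; ring
    · exact (continuous_const.mul ((continuous_id.mul (continuous_const.sub continuous_id)))).intervalIntegrable 0 τ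
    · apply ContinuousOn.intervalIntegrable
      rw [huIcc]
      exact (((continuousOn_const.mul continuousOn_id).mul
        (continuousOn_const.sub continuousOn_id)).mul hu)
  have hpoly : (∫ x in (0:ℝ)..τ, x * (τ - x)) = τ ^ 3 / 6 := by
    have : (∫ x in (0:ℝ)..τ, x * (τ - x)) = ∫ x in (0:ℝ)..τ, (τ * x - x ^ 2) := by
      apply intervalIntegral.integral_congr; intro x _; ring
    rw [this, intervalIntegral.integral_sub, intervalIntegral.integral_const_mul,
      integral_id, integral_pow]
    · ring
    · exact (continuous_const.mul continuous_id).intervalIntegrable 0 τ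
    · exact (continuous_pow 2).intervalIntegrable 0 τ
  rw [hsplit]
  have key : (∫ σ in (0:ℝ)..τ, (τ - 2 * σ) * y σ)
      = - (F * (τ ^ 3 / 6) + ∫ x in (0:ℝ)..τ, α * x * (τ - x) * u x) := by
    have := ibp
    rw [hFu, hpoly] at this
    simp only [sub_self, mul_zero, zero_mul, sub_zero, zero_sub] at this
    linarith [this]
  rw [key]
  field_simp
  ring
end
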